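/- Let Γ be a planar graph such that the ordered configuration space F(Γ,2) is path-connected. Then the triple ((S^m, A); Γ) satisfies the Borsuk–Ulam property for every m ≥ 2, and moreover secat(q^Γ : F(Γ,2) → D(Γ,2)) = 2. -/

import Mathlib

open Metric Set

/-- A continuous local section of `p` over `U`. -/
def IsLocalSection {E B : Type*} [TopologicalSpace E] [TopologicalSpace B]
    (p : E → B) (U : Set B) : Prop :=
  ∃ s : U → E, Continuous s ∧ ∀ x : U, p (s x) = (x : B)

/-- The sectional category of a map `p : E → B`: the least number of open sets covering `B`,
over each of which `p` admits a continuous local section; `⊤` if no finite cover exists. -/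
noncomputable def secat {E B : Type*} [TopologicalSpace E] [TopologicalSpace B]
    (p : E → B) : ℕ∞ :=
  sInf {n : ℕ∞ | ∃ k : ℕ, n = (k : ℕ∞) ∧ ∃ U : Fin k → Set B,
    (∀ i, IsOpen (U i)) ∧ (⋃ i, U i) = Set.univ ∧ ∀ i, IsLocalSection p (U i)}

/-- A subset is contractible within the ambient space if its inclusion is nullhomotopic. -/
def ContractibleIn {X : Type*} [TopologicalSpace X] (U : Set X) : Prop :=
  ContinuousMap.Nullhomotopic (⟨(Subtype.val : U → X), continuous_subtype_val⟩ : C(U, X))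

/-- Lusternik–Schnirelmann category: least number of open sets covering `X`, each
contractible within `X`. -/
noncomputable def LScat (X : Type*) [TopologicalSpace X] : ℕ∞ :=
  sInf {n : ℕ∞ | ∃ k : ℕ, n = (k : ℕ∞) ∧ ∃ U : Fin k → Set X,
    (∀ i, IsOpen (U i)) ∧ (⋃ i, U i) = Set.univ ∧ ∀ i, ContractibleIn (U i)}

/-- Hurewicz fibration: the homotopy lifting property with respect to all spaces. -/
def IsHurewiczFibration {E B : Type*} [TopologicalSpace E] [TopologicalSpace B]
    (p : E → B) : Prop :=
  ∀ (Z : Type*) [TopologicalSpace Z] (H : Z × unitInterval → B) (h : Z → E),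
    Continuous H → Continuous h → (∀ z, p (h z) = H (z, 0)) →
    ∃ G : Z × unitInterval → E, Continuous G ∧ (∀ z, G (z, 0) = h z) ∧ ∀ w, p (G w) = H w

/-- The orbit relation of the action generated by a map `τ`. -/
def orbitRelOf {X : Type*} (τ : X → X) : X → X → Prop := fun x y => y = τ x

/-- Quotient of `X` by the (involutive) map `τ`, with the quotient topology. -/
abbrev InvolQuot {X : Type*} [TopologicalSpace X] (τ : X → X) : Type _ := Quot (orbitRelOf τ)

/-- The quotient map `X → X/τ`. -/
def involQuotMk {X : Type*} [TopologicalSpace X] (τ : X → X) : X → InvolQuot τ :=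
  Quot.mk (orbitRelOf τ)

/-- The ordered configuration space `F(Y,2)` of two distinct points of `Y`. -/
abbrev Conf2 (Y : Type*) [TopologicalSpace Y] : Type _ := {p : Y × Y // p.1 ≠ p.2}

/-- The swap involution `τ₂` on `F(Y,2)`. -/
def confSwap {Y : Type*} [TopologicalSpace Y] : Conf2 Y → Conf2 Y :=
  fun p => ⟨(p.1.2, p.1.1), Ne.symm p.2⟩

/-- The unordered configuration space `D(Y,2) = F(Y,2)/τ₂`. -/
abbrev UConf2 (Y : Type*) [TopologicalSpace Y] : Type _ := InvolQuot (confSwap (Y := Y))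

/-- The quotient double covering `q^Y : F(Y,2) → D(Y,2)`. -/
def confQuotMk (Y : Type*) [TopologicalSpace Y] : Conf2 Y → UConf2 Y :=
  involQuotMk confSwap

/-- The Borsuk–Ulam property for the triple `((X,τ);Y)`. -/
def BorsukUlamProperty (X : Type*) [TopologicalSpace X] (τ : X → X)
    (Y : Type*) [TopologicalSpace Y] : Prop :=
  ∀ f : X → Y, Continuous f → ∃ x : X, f (τ x) = f x

/-- The `m`-sphere as the unit sphere of `ℝ^{m+1}`. -/
abbrev Sph (m : ℕ) : Type := Metric.sphere (0 : EuclideanSpace ℝ (Fin (m + 1))) 1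

/-- The antipodal involution on the sphere. -/
noncomputable def antipodal (m : ℕ) : Sph m → Sph m := fun x => -x

/-- The smallest dimension of a Euclidean space into which `Y` embeds. -/
noncomputable def embDim (Y : Type*) [TopologicalSpace Y] : ℕ∞ :=
  sInf {n : ℕ∞ | ∃ k : ℕ, n = (k : ℕ∞) ∧
    ∃ e : Y → EuclideanSpace ℝ (Fin k), Topology.IsEmbedding e}

/-- The `ℤ/2`-index of `(X,τ)`: the least `n` such that there is a continuous map
`X → Sⁿ` which is equivariant for `τ` and the antipodal involution. -/
noncomputable def z2Index {X : Type*} [TopologicalSpace X] (τ : X → X) : ℕ∞ :=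
  sInf {n : ℕ∞ | ∃ k : ℕ, n = (k : ℕ∞) ∧
    ∃ g : X → Sph k, Continuous g ∧ ∀ x, g (τ x) = antipodal k (g x)}

section CW

/-- A (classical) CW-complex structure on a Hausdorff space `X`: a family of cells
with characteristic maps from closed disks, the images of the open disks partitioning `X`,
each attaching map sending the boundary sphere into cells of lower dimension, together with
closure finiteness (C) and the weak topology (W). -/
structure CWStructure (X : Type u) [TopologicalSpace X] : Type (u + 1) where
  /-- index type of the `n`-cells -/
  cell : ℕ → Type u
  /-- characteristic map of each `n`-cell -/
  map : (n : ℕ) → cell n → EuclideanSpace ℝ (Fin n) → X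
  continuousOn : ∀ n i, ContinuousOn (map n i) (closedBall 0 1)
  injOn : ∀ n i, Set.InjOn (map n i) (ball 0 1)
  partition : ∀ x : X, ∃! p : Σ n, cell n, x ∈ map p.1 p.2 '' ball 0 1
  mapsTo_boundary : ∀ n i, Set.MapsTo (map n i) (sphere 0 1)
    (⋃ (m : ℕ) (_ : m < n) (j : cell m), map m j '' closedBall 0 1)
  closureFinite : ∀ n i, {p : Σ m, cell m |
    (map p.1 p.2 '' ball 0 1 ∩ map n i '' closedBall 0 1).Nonempty}.Finite
  weakTopology : ∀ A : Set X,
    (∀ n i, IsClosed (A ∩ map n i '' closedBall 0 1)) → IsClosed A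

namespace CWStructure

variable {X : Type u} [TopologicalSpace X] (S : CWStructure X)

/-- The `n`-skeleton of a CW structure. -/
def skeleton (n : ℕ) : Set X :=
  ⋃ (m : ℕ) (_ : m ≤ n) (j : S.cell m), S.map m j '' closedBall 0 1

/-- The CW structure has dimension at most `d`. -/
def DimLE (d : ℕ) : Prop := ∀ n, d < n → IsEmpty (S.cell n)

/-- The CW structure has dimension exactly `d`. -/
def DimEq (d : ℕ) : Prop := S.DimLE d ∧ Nonempty (S.cell d)

/-- A self-map is cellular if it maps each skeleton into itself. -/
def Cellular (f : X → X) : Prop := ∀ n, Set.MapsTo f (S.skeleton n) (S.skeleton n)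

end CWStructure

/-- The homotopical dimension of `X` is at most `d`: `X` is homotopy equivalent to a
CW complex of dimension at most `d`. -/
def HDimLE (X : Type u) [TopologicalSpace X] (d : ℕ) : Prop :=
  ∃ (Z : Type u) (_ : TopologicalSpace Z) (S : CWStructure Z),
    S.DimLE d ∧ Nonempty (ContinuousMap.HomotopyEquiv Z X)

end CW

section Lemmas
variable {Y : Type*} [TopologicalSpace Y]

lemma confSwap_swap (x : Conf2 Y) : confSwap (confSwap x) = x := by
  cases x with | mk p h => rfl

lemma confSwap_ne (x : Conf2 Y) : confSwap x ≠ x := by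
  intro h
  have h2 := congrArg (fun z => (z : Conf2 Y).1.1) h
  exact x.2 (h2.symm)

lemma confQuotMk_swap (x : Conf2 Y) : confQuotMk Y (confSwap x) = confQuotMk Y x :=
  (Quot.sound (show orbitRelOf confSwap x (confSwap x) from rfl)).symm

lemma confQuotMk_eq {a b : Conf2 Y} (h : confQuotMk Y a = confQuotMk Y b) :
    a = b ∨ b = confSwap a := by
  have key : Quot.lift (fun c => a = c ∨ a = confSwap c)
      (by
        intro x y hxy
        have hxy' : y = confSwap x := hxy
        subst hxy'
        apply propext
        show (a = x ∨ a = confSwap x) ↔ (a = confSwap x ∨ a = confSwap (confSwap x))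
        rw [confSwap_swap]
        tauto) (confQuotMk Y b) := by
    rw [← h]
    exact Or.inl rfl
  rcases key with h1 | h1
  · exact Or.inl h1
  · exact Or.inr (by rw [h1, confSwap_swap])

lemma continuous_confSwap : Continuous (confSwap (Y := Y)) := by
  apply Continuous.subtype_mk
  exact ((continuous_snd.comp continuous_subtype_val).prodMk
    (continuous_fst.comp continuous_subtype_val))

lemma continuous_confQuotMk : Continuous (confQuotMk Y) := continuous_quot_mk

lemma isOpen_image_confQuotMk {W : Set (Conf2 Y)} (hW : IsOpen W) :
    IsOpen (confQuotMk Y '' W) := by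
  rw [← isQuotientMap_quot_mk.isOpen_preimage]
  have : Quot.mk (orbitRelOf confSwap) ⁻¹' (confQuotMk Y '' W) = W ∪ confSwap ⁻¹' W := by
    ext z
    constructor
    · rintro ⟨w, hwW, hw⟩
      rcases confQuotMk_eq hw with h1 | h1
      · exact Or.inl (h1 ▸ hwW)
      · right
        show confSwap z ∈ W
        rw [h1, confSwap_swap]
        exact hwW
    · rintro (hz | hz)
      · exact ⟨z, hz, rfl⟩
      · exact ⟨confSwap z, hz, confQuotMk_swap z⟩
  rw [this]
  exact hW.union (hW.preimage continuous_confSwap)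

section Secat
variable {Γ : Type*} [TopologicalSpace Γ] [T2Space Γ]

/-- local section over the image of a "sorted" open set -/
lemma localSection_of_lt (g : Γ → ℝ) (hg : Continuous g) :
    IsLocalSection (confQuotMk Γ) (confQuotMk Γ '' {x : Conf2 Γ | g x.1.1 ≠ g x.1.2}) := by
  classical
  set W : Set (Conf2 Γ) := {x : Conf2 Γ | g x.1.1 ≠ g x.1.2} with hWdef
  set V : Set (Conf2 Γ) := {x : Conf2 Γ | g x.1.1 < g x.1.2} with hVdef
  have hVopen : IsOpen V := by
    rw [hVdef]
    have h1 : Continuous fun x : Conf2 Γ => g x.1.1 :=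
      hg.comp (continuous_fst.comp continuous_subtype_val)
    have h2 : Continuous fun x : Conf2 Γ => g x.1.2 :=
      hg.comp (continuous_snd.comp continuous_subtype_val)
    exact isOpen_lt h1 h2
  set U : Set (UConf2 Γ) := confQuotMk Γ '' W with hUdef
  -- the map φ : V → U
  have hVU : ∀ v : V, confQuotMk Γ v.1 ∈ U := by
    rintro ⟨v, hv⟩
    exact ⟨v, ne_of_lt hv, rfl⟩
  set φ : V → U := fun v => ⟨confQuotMk Γ v.1, hVU v⟩ with hφdef
  have hφcont : Continuous φ := by
    apply Continuous.subtype_mk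
    exact continuous_confQuotMk.comp continuous_subtype_val
  have hswapV : ∀ {x : Conf2 Γ}, x ∈ V → confSwap x ∉ V := by
    intro x hx hx'
    exact lt_asymm (show g x.1.1 < g x.1.2 from hx) (show g x.1.2 < g x.1.1 from hx')
  have hφinj : Function.Injective φ := by
    rintro ⟨x, hx⟩ ⟨y, hy⟩ hxy
    have h1 : confQuotMk Γ x = confQuotMk Γ y := congrArg Subtype.val hxy
    rcases confQuotMk_eq h1 with h2 | h2
    · exact Subtype.ext h2
    · exfalso
      exact hswapV hx (h2 ▸ hy)
  have hφsurj : Function.Surjective φ := by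
    rintro ⟨u, w, hwW, hwu⟩
    rcases lt_or_gt_of_ne hwW with hlt | hgt
    · exact ⟨⟨w, hlt⟩, Subtype.ext hwu⟩
    · refine ⟨⟨confSwap w, hgt⟩, Subtype.ext ?_⟩
      show confQuotMk Γ (confSwap w) = u
      rw [confQuotMk_swap, hwu]
  have hφopen : IsOpenMap φ := by
    intro O hO
    rcases isOpen_induced_iff.mp hO with ⟨O', hO', rfl⟩
    have hT : IsOpen (confQuotMk Γ '' (O' ∩ V)) :=
      isOpen_image_confQuotMk (hO'.inter hVopen)
    have himg : φ '' (Subtype.val ⁻¹' O') = Subtype.val ⁻¹' (confQuotMk Γ '' (O' ∩ V)) := by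
      ext u
      constructor
      · rintro ⟨⟨v, hvV⟩, hvO, rfl⟩
        exact ⟨v, ⟨hvO, hvV⟩, rfl⟩
      · rintro ⟨w, ⟨hwO, hwV⟩, hw⟩
        exact ⟨⟨w, hwV⟩, hwO, Subtype.ext hw⟩
    rw [himg]
    exact hT.preimage continuous_subtype_val
  set ψ := Equiv.toHomeomorphOfContinuousOpen
    (Equiv.ofBijective φ ⟨hφinj, hφsurj⟩) hφcont hφopen with hψdef
  refine ⟨fun u => (ψ.symm u).1, continuous_subtype_val.comp ψ.symm.continuous, ?_⟩
  intro u
  have : φ (ψ.symm u) = u := ψ.apply_symm_apply u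
  exact congrArg Subtype.val this

variable [PathConnectedSpace (Conf2 Γ)]

lemma no_global_section : ¬ IsLocalSection (confQuotMk Γ) (Set.univ : Set (UConf2 Γ)) := by
  rintro ⟨s, hs, hsec⟩
  set σ : Conf2 Γ → Conf2 Γ := fun x => s ⟨confQuotMk Γ x, trivial⟩ with hσdef
  have hσcont : Continuous σ := hs.comp (Continuous.subtype_mk continuous_confQuotMk _)
  have hσq : ∀ x, confQuotMk Γ (σ x) = confQuotMk Γ x := fun x => hsec _
  have hσswap : ∀ x, σ (confSwap x) = σ x := by
    intro x
    show s _ = s _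
    congr 1
    exact Subtype.ext (confQuotMk_swap x)
  have hcases : ∀ x, σ x = x ∨ σ x = confSwap x := by
    intro x
    rcases confQuotMk_eq (hσq x) with h | h
    · exact Or.inl h
    · refine Or.inr ?_
      have h2 : confSwap x = σ x := by nth_rewrite 1 [h]; rw [confSwap_swap]
      exact h2.symm
  set A : Set (Conf2 Γ) := {x | σ x = x} with hAdef
  set B : Set (Conf2 Γ) := {x | σ x = confSwap x} with hBdef
  have hAclosed : IsClosed A := isClosed_eq hσcont continuous_id
  have hBclosed : IsClosed B := isClosed_eq hσcont continuous_confSwap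
  have hAB : A ∪ B = Set.univ := by
    ext x; simp only [Set.mem_union, Set.mem_univ, iff_true]; exact hcases x
  have hABdisj : A ∩ B = (∅ : Set (Conf2 Γ)) := by
    ext x
    simp only [Set.mem_inter_iff, Set.mem_empty_iff_false, iff_false]
    rintro ⟨h1, h2⟩
    exact confSwap_ne x (h2.symm.trans h1)
  obtain ⟨x₀⟩ : Nonempty (Conf2 Γ) := PathConnectedSpace.nonempty
  have hAne : A.Nonempty := by
    by_contra hA
    rw [Set.not_nonempty_iff_eq_empty] at hA
    have hball : ∀ x, σ x = confSwap x := by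
      intro x
      rcases hcases x with h | h
      · exfalso
        have : x ∈ A := h
        rw [hA] at this
        exact this
      · exact h
    have h1 : σ (confSwap x₀) = confSwap (confSwap x₀) := hball _
    rw [hσswap, hball, confSwap_swap] at h1
    exact confSwap_ne x₀ h1
  have hBne : B.Nonempty := by
    by_contra hB
    rw [Set.not_nonempty_iff_eq_empty] at hB
    have hball : ∀ x, σ x = x := by
      intro x
      rcases hcases x with h | h
      · exact h
      · exfalso
        have : x ∈ B := h
        rw [hB] at this
        exact this
    have h1 : σ (confSwap x₀) = confSwap x₀ := hball _
    rw [hσswap, hball] at h1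
    exact confSwap_ne x₀ h1.symm
  have hAopen : IsOpen A := by
    have hcompl : A = Bᶜ := by
      ext x
      simp only [Set.mem_compl_iff]
      constructor
      · intro h1 h2
        have : confSwap x = x := by
          have : x ∈ A ∩ B := ⟨h1, h2⟩
          rw [hABdisj] at this
          exact absurd this (Set.notMem_empty x)
        exact confSwap_ne x this
      · intro h1
        rcases hcases x with h | h
        · exact h
        · exact absurd h h1
    rw [hcompl]
    exact hBclosed.isOpen_compl
  have hclopen : IsClopen A := ⟨hAclosed, hAopen⟩
  rcases isClopen_iff.mp hclopen with h | h
  · rw [h] at hAne; exact Set.not_nonempty_empty hAne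
  · obtain ⟨b, hb⟩ := hBne
    have : b ∈ A := h ▸ Set.mem_univ b
    have : b ∈ A ∩ B := ⟨this, hb⟩
    rw [hABdisj] at this
    exact this

theorem secat_confQuotMk_eq_two
    (e : Γ → EuclideanSpace ℝ (Fin 2)) (he : Topology.IsEmbedding e) :
    secat (confQuotMk Γ) = 2 := by
  classical
  obtain ⟨x₀⟩ : Nonempty (Conf2 Γ) := PathConnectedSpace.nonempty
  apply le_antisymm
  · -- upper bound: two open sets
    apply sInf_le
    refine ⟨2, rfl, ?_⟩
    set U : Fin 2 → Set (UConf2 Γ) := fun i =>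
      confQuotMk Γ '' {x : Conf2 Γ | e x.1.1 i ≠ e x.1.2 i} with hU
    refine ⟨U, ?_, ?_, ?_⟩
    · intro i
      apply isOpen_image_confQuotMk
      apply isOpen_ne_fun
      · exact (by fun_prop : Continuous fun y : EuclideanSpace ℝ (Fin 2) => y i).comp (he.continuous.comp (continuous_fst.comp continuous_subtype_val))
      · exact (by fun_prop : Continuous fun y : EuclideanSpace ℝ (Fin 2) => y i).comp (he.continuous.comp (continuous_snd.comp continuous_subtype_val))
    · apply Set.eq_univ_of_forall
      intro z
      obtain ⟨x, rfl⟩ := Quot.exists_rep z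
      have hx : e x.1.1 ≠ e x.1.2 := fun h => x.2 (he.injective h)
      have : ∃ i : Fin 2, e x.1.1 i ≠ e x.1.2 i := by
        by_contra hc
        push_neg at hc
        exact hx (PiLp.ext hc)
      obtain ⟨i, hi⟩ := this
      exact Set.mem_iUnion.mpr ⟨i, x, hi, rfl⟩
    · intro i
      exact localSection_of_lt (fun y => e y i) ((by fun_prop : Continuous fun y : EuclideanSpace ℝ (Fin 2) => y i).comp he.continuous)
  · -- lower bound
    apply le_sInf
    rintro n ⟨k, rfl, U, hopen, hcov, hsec⟩
    by_contra hlt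
    push_neg at hlt
    have hk : k < 2 := by exact_mod_cast hlt
    interval_cases k
    · have : (Quot.mk _ x₀ : UConf2 Γ) ∈ (⋃ i : Fin 0, U i) := hcov ▸ Set.mem_univ _
      simpa using this
    · have hU0 : U 0 = Set.univ := by
        apply Set.eq_univ_of_forall
        intro z
        have : z ∈ ⋃ i : Fin 1, U i := hcov ▸ Set.mem_univ _
        rcases Set.mem_iUnion.mp this with ⟨i, hi⟩
        have : i = 0 := Subsingleton.elim i 0
        exact this ▸ hi
      have := hsec 0
      rw [hU0] at this
      exact no_global_section this

end Secat

end Lemmas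

namespace BUaux
open Complex

/-- Constancy of a continuous function with constant exponential, on an interval. -/
lemma const_of_exp_const {f : ℝ → ℂ} {a b : ℝ} (hf : ContinuousOn f (Set.Icc a b))
    (hexp : ∀ x ∈ Set.Icc a b, ∀ y ∈ Set.Icc a b, Complex.exp (f x) = Complex.exp (f y)) :
    ∀ x ∈ Set.Icc a b, ∀ y ∈ Set.Icc a b, f x = f y := by
  intro x hx y hy
  by_contra hne
  -- every value differs from f x by an integer multiple of 2πi
  have hmul : ∀ t ∈ Set.Icc a b, ∃ n : ℤ, f t - f x = n * (2 * Real.pi * Complex.I) := by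
    intro t ht
    rcases Complex.exp_eq_exp_iff_exists_int.mp (hexp t ht x hx) with ⟨n, hn⟩
    exact ⟨n, by rw [hn]; ring⟩
  obtain ⟨ny, hny⟩ := hmul y hy
  have hny0 : ny ≠ 0 := by
    intro h
    rw [h] at hny
    simp only [Int.cast_zero, zero_mul] at hny
    exact hne (sub_eq_zero.mp hny).symm
  -- imaginary parts
  have him : ∀ t ∈ Set.Icc a b, ∃ n : ℤ, (f t).im - (f x).im = n * (2 * Real.pi) := by
    intro t ht
    obtain ⟨n, hn⟩ := hmul t ht
    refine ⟨n, ?_⟩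
    have := congrArg Complex.im hn
    simpa using this
  have himy : (f y).im - (f x).im = ny * (2 * Real.pi) := by
    have := congrArg Complex.im hny
    simpa using this
  -- IVT on the imaginary part
  set F : ℝ → ℝ := fun t => (f t).im - (f x).im with hF
  have hFcont : ContinuousOn F (Set.uIcc x y) := by
    apply ContinuousOn.sub
    · exact (Complex.continuous_im.comp_continuousOn
        (hf.mono ((Set.ordConnected_Icc).uIcc_subset hx hy))).congr (fun t ht => rfl)
    · exact continuousOn_const
  have hsub : Set.uIcc x y ⊆ Set.Icc a b :=
    (Set.ordConnected_Icc).uIcc_subset hx hy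
  set c : ℝ := if 0 < (ny:ℝ) then Real.pi else -Real.pi with hc
  have hcmem : c ∈ Set.uIcc (F x) (F y) := by
    have hFx : F x = 0 := by simp [hF]
    have hFy : F y = ny * (2 * Real.pi) := himy
    rw [hFx, hFy]
    rcases lt_or_gt_of_ne (show (ny:ℝ) ≠ 0 from Int.cast_ne_zero.mpr hny0) with hneg | hpos
    · have h0 : ny < 0 := by exact_mod_cast hneg
      have h1 : (ny:ℝ) ≤ -1 := by exact_mod_cast (by omega : ny ≤ -1)
      have hpi := Real.pi_pos
      rw [hc, if_neg (by linarith)]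
      rw [Set.mem_uIcc]
      right
      constructor <;> nlinarith
    · have h1 : (1:ℝ) ≤ (ny:ℝ) := by exact_mod_cast hpos
      have hpi := Real.pi_pos
      rw [hc, if_pos (by linarith)]
      rw [Set.mem_uIcc]
      left
      constructor <;> nlinarith
  obtain ⟨t, ht, hFt⟩ := intermediate_value_uIcc hFcont hcmem
  obtain ⟨n, hn⟩ := him t (hsub ht)
  have : c = n * (2 * Real.pi) := by rw [← hFt, hF]; exact hn
  have hpi := Real.pi_ne_zero
  rcases le_or_gt (ny:ℝ) 0 with h | h
  · rw [hc, if_neg (not_lt.mpr h)] at this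
    have h2 : (-1 : ℝ) = (n:ℝ) * 2 := by
      apply mul_right_cancel₀ Real.pi_ne_zero
      linear_combination this
    have h3 : (-1 : ℤ) = n * 2 := by exact_mod_cast h2
    omega
  · rw [hc, if_pos h] at this
    have h2 : (1 : ℝ) = (n:ℝ) * 2 := by
      apply mul_right_cancel₀ Real.pi_ne_zero
      linear_combination this
    have h3 : (1 : ℤ) = n * 2 := by exact_mod_cast h2
    omega

end BUaux

namespace BUaux

/-- Continuous logarithm of a nonvanishing continuous function on the unit square
(star-shaped about the origin). -/
lemma exists_continuous_log {G : ℝ × ℝ → ℂ} (hG : Continuous G) (hG0 : ∀ p, G p ≠ 0) :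
    ∃ L : ℝ × ℝ → ℂ, ContinuousOn L ((Set.Icc (0:ℝ) 1) ×ˢ (Set.Icc (0:ℝ) 1)) ∧
      ∀ p ∈ (Set.Icc (0:ℝ) 1) ×ˢ (Set.Icc (0:ℝ) 1), Complex.exp (L p) = G p := by
  classical
  set Q : Set (ℝ × ℝ) := (Set.Icc (0:ℝ) 1) ×ˢ (Set.Icc (0:ℝ) 1) with hQ
  have hQcomp : IsCompact Q := (isCompact_Icc).prod (isCompact_Icc)
  have hQ0 : ((0:ℝ), (0:ℝ)) ∈ Q := by
    constructor <;> exact ⟨le_refl 0, zero_le_one⟩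
  -- minimum of ‖G‖ on Q
  obtain ⟨p₀, hp₀Q, hp₀'⟩ := hQcomp.exists_isMinOn ⟨_, hQ0⟩
    (hG.norm.continuousOn : ContinuousOn (fun p => ‖G p‖) Q)
  have hp₀ : ∀ q ∈ Q, ‖G p₀‖ ≤ ‖G q‖ := fun q hq => hp₀' hq
  set m : ℝ := ‖G p₀‖ with hm
  have hmpos : 0 < m := norm_pos_iff.mpr (hG0 p₀)
  -- uniform continuity
  have hUC : UniformContinuousOn G Q := hQcomp.uniformContinuousOn_of_continuous hG.continuousOn
  obtain ⟨δ, hδpos, hδ⟩ := (Metric.uniformContinuousOn_iff).mp hUC m hmpos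
  obtain ⟨n₀, hn₀⟩ := exists_nat_one_div_lt hδpos
  set N : ℕ := n₀ + 1 with hN
  have hNpos : (0:ℝ) < N := by positivity
  have hNlt : 1 / (N:ℝ) < δ := by exact_mod_cast hn₀
  -- scaling facts
  have hscale : ∀ (c : ℝ), 0 ≤ c → c ≤ 1 → ∀ p ∈ Q, c • p ∈ Q := by
    rintro c hc0 hc1 ⟨p1, p2⟩ ⟨⟨h1, h2⟩, ⟨h3, h4⟩⟩
    refine ⟨⟨?_, ?_⟩, ⟨?_, ?_⟩⟩
    · exact mul_nonneg hc0 h1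
    · exact mul_le_one₀ hc1 h1 h2
    · exact mul_nonneg hc0 h3
    · exact mul_le_one₀ hc1 h3 h4
  have hmemj : ∀ (j : ℕ), j ≤ N → ∀ p ∈ Q, ((j:ℝ)/N) • p ∈ Q := by
    intro j hj p hp
    exact hscale _ (by positivity) (by
      rw [div_le_one hNpos]
      exact_mod_cast hj) p hp
  have hnorm_le : ∀ p ∈ Q, ‖p‖ ≤ 1 := by
    rintro ⟨p1, p2⟩ ⟨⟨h1, h2⟩, ⟨h3, h4⟩⟩
    rw [Prod.norm_def]
    apply max_le <;> rw [Real.norm_eq_abs, abs_le] <;> constructor <;> linarith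
  have hdist : ∀ (j : ℕ), ∀ p ∈ Q,
      dist ((((j:ℝ)+1)/N) • p) (((j:ℝ)/N) • p) < δ := by
    intro j p hp
    rw [dist_eq_norm, ← sub_smul]
    have : ((j:ℝ)+1)/N - (j:ℝ)/N = 1/N := by field_simp; ring
    rw [this, norm_smul]
    calc ‖(1/(N:ℝ))‖ * ‖p‖ ≤ (1/N) * 1 := by
          apply mul_le_mul _ (hnorm_le p hp) (norm_nonneg p) (by positivity)
          rw [Real.norm_eq_abs, abs_of_pos (by positivity)]
      _ = 1/N := mul_one _
      _ < δ := hNlt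
  -- the ratios lie in the slit plane
  set R : ℕ → (ℝ × ℝ) → ℂ := fun j p => G ((((j:ℝ)+1)/N) • p) / G (((j:ℝ)/N) • p) with hR
  have hRnorm : ∀ j < N, ∀ p ∈ Q, ‖R j p - 1‖ < 1 := by
    intro j hj p hp
    have hja : ((j:ℝ)/N) • p ∈ Q := hmemj j (le_of_lt hj) p hp
    have hjb : (((j:ℝ)+1)/N) • p ∈ Q := by
      have : ((j:ℝ)+1) = ((j+1:ℕ):ℝ) := by push_cast; ring
      rw [this]
      exact hmemj (j+1) (by omega) p hp
    have hne : G (((j:ℝ)/N) • p) ≠ 0 := hG0 _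
    rw [hR]
    have : G ((((j:ℝ)+1)/N) • p) / G (((j:ℝ)/N) • p) - 1
        = (G ((((j:ℝ)+1)/N) • p) - G (((j:ℝ)/N) • p)) / G (((j:ℝ)/N) • p) := by
      field_simp
    rw [this, norm_div, div_lt_one (norm_pos_iff.mpr hne)]
    calc ‖G ((((j:ℝ)+1)/N) • p) - G (((j:ℝ)/N) • p)‖
        = dist (G ((((j:ℝ)+1)/N) • p)) (G (((j:ℝ)/N) • p)) := (dist_eq_norm _ _).symm
      _ < m := hδ _ hjb _ hja (hdist j p hp)
      _ ≤ ‖G (((j:ℝ)/N) • p)‖ := hp₀ _ hja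
  have hRslit : ∀ j < N, ∀ p ∈ Q, R j p ∈ Complex.slitPlane := by
    intro j hj p hp
    apply Complex.mem_slitPlane_iff.mpr
    left
    have h1 := hRnorm j hj p hp
    have h2 : |(R j p - 1).re| ≤ ‖R j p - 1‖ := Complex.abs_re_le_norm _
    have h3 : (R j p - 1).re = (R j p).re - 1 := by simp
    rw [h3] at h2
    have := abs_le.mp h2
    linarith [this.1]
  -- the logarithm
  set L : ℝ × ℝ → ℂ := fun p => Complex.log (G (0, 0)) +
    ∑ j ∈ Finset.range N, Complex.log (R j p) with hL
  refine ⟨L, ?_, ?_⟩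
  · -- continuity
    apply ContinuousOn.add continuousOn_const
    apply continuousOn_finset_sum
    intro j hj
    apply ContinuousOn.clog
    · apply Continuous.continuousOn
      apply Continuous.div
      · exact hG.comp (continuous_const_smul _)
      · exact hG.comp (continuous_const_smul _)
      · intro p; exact hG0 _
    · intro p hp
      exact hRslit j (Finset.mem_range.mp hj) p hp
  · -- exponential
    intro p hp
    have key : ∀ k : ℕ, k ≤ N → Complex.exp (Complex.log (G (0,0)) +
        ∑ j ∈ Finset.range k, Complex.log (R j p)) = G (((k:ℝ)/N) • p) := by
      intro k hk
      induction k with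
      | zero =>
        simp only [Finset.range_zero, Finset.sum_empty, add_zero, Complex.exp_log (hG0 _)]
        norm_num
        rfl
      | succ k ih =>
        rw [Finset.sum_range_succ, ← add_assoc, Complex.exp_add,
          ih (by omega), Complex.exp_log]
        · have hne : G (((k:ℝ)/N) • p) ≠ 0 := hG0 _
          rw [hR]
          have hcast : ((k+1:ℕ):ℝ) = (k:ℝ)+1 := by push_cast; ring
          rw [hcast]
          field_simp
        · rw [hR]
          exact div_ne_zero (hG0 _) (hG0 _)
    have := key N (le_refl N)
    rw [div_self (ne_of_gt hNpos), one_smul] at this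
    exact this

end BUaux

namespace BUaux

open Real

variable {m : ℕ}

/-- clamp to [0,1] -/
noncomputable def cl (s : ℝ) : ℝ := max 0 (min s 1)

lemma cl_nonneg (s : ℝ) : 0 ≤ cl s := le_max_left _ _
lemma cl_le_one (s : ℝ) : cl s ≤ 1 := max_le zero_le_one (min_le_right _ _)
lemma cl_zero : cl 0 = 0 := by simp [cl]
lemma cl_one : cl 1 = 1 := by simp [cl]
lemma continuous_cl : Continuous cl :=
  continuous_const.max ((continuous_id.min continuous_const))

section Psi

/-- coordinates of the 2-sphere parametrization inside the m-sphere -/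
noncomputable def wcoord (hm : 2 ≤ m) (s t : ℝ) : EuclideanSpace ℝ (Fin (m + 1)) := WithLp.toLp 2 fun i =>
  if i = (⟨0, by omega⟩ : Fin (m+1)) then cl s * Real.cos (2 * π * t)
  else if i = (⟨1, by omega⟩ : Fin (m+1)) then cl s * Real.sin (2 * π * t)
  else if i = (⟨2, by omega⟩ : Fin (m+1)) then Real.sqrt (1 - cl s ^ 2)
  else 0

lemma wcoord_norm (hm : 2 ≤ m) (s t : ℝ) : ‖wcoord hm s t‖ = 1 := by
  classical
  set i0 : Fin (m+1) := ⟨0, by omega⟩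
  set i1 : Fin (m+1) := ⟨1, by omega⟩
  set i2 : Fin (m+1) := ⟨2, by omega⟩
  have h01 : i0 ≠ i1 := by simp [i0, i1, Fin.ext_iff]
  have h02 : i0 ≠ i2 := by simp [i0, i2, Fin.ext_iff]
  have h12 : i1 ≠ i2 := by simp [i1, i2, Fin.ext_iff]
  have hsq : 0 ≤ 1 - cl s ^ 2 := by
    have h1 := cl_nonneg s
    have h2 := cl_le_one s
    nlinarith
  rw [EuclideanSpace.norm_eq]
  have hzero : ∀ i : Fin (m+1), i ∉ ({i0, i1, i2} : Finset (Fin (m+1))) →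
      ‖wcoord hm s t i‖ ^ 2 = 0 := by
    intro i hi
    simp only [Finset.mem_insert, Finset.mem_singleton, not_or] at hi
    obtain ⟨hi0, hi1, hi2⟩ := hi
    rw [wcoord, PiLp.toLp_apply, if_neg hi0, if_neg hi1, if_neg hi2]
    simp
  have hsum : ∑ i, ‖wcoord hm s t i‖ ^ 2 = ∑ i ∈ ({i0, i1, i2} : Finset (Fin (m+1))),
      ‖wcoord hm s t i‖ ^ 2 :=
    (Finset.sum_subset (Finset.subset_univ _) (fun i _ hi => hzero i hi)).symm
  rw [hsum]
  rw [Finset.sum_insert (by simp [h01, h02]), Finset.sum_insert (by simp [h12]),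
    Finset.sum_singleton]
  have e0 : wcoord hm s t i0 = cl s * Real.cos (2 * π * t) := by rw [wcoord, PiLp.toLp_apply, if_pos rfl]
  have e1 : wcoord hm s t i1 = cl s * Real.sin (2 * π * t) := by
    rw [wcoord, PiLp.toLp_apply, if_neg (Ne.symm h01), if_pos rfl]
  have e2 : wcoord hm s t i2 = Real.sqrt (1 - cl s ^ 2) := by
    rw [wcoord, PiLp.toLp_apply, if_neg (Ne.symm h02), if_neg (Ne.symm h12), if_pos rfl]
  rw [e0, e1, e2]
  rw [Real.norm_eq_abs, Real.norm_eq_abs, Real.norm_eq_abs, _root_.sq_abs, _root_.sq_abs, _root_.sq_abs]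
  have hpyth := Real.sin_sq_add_cos_sq (2 * π * t)
  have hs := Real.sq_sqrt hsq
  have : cl s * Real.cos (2 * π * t) ^ 2 * Real.cos (2*π*t) = 0 ∨ True := Or.inr trivial
  have hfinal : (cl s * Real.cos (2 * π * t)) ^ 2 + ((cl s * Real.sin (2 * π * t)) ^ 2
      + Real.sqrt (1 - cl s ^ 2) ^ 2) = 1 := by
    rw [hs]
    nlinarith
  rw [hfinal, Real.sqrt_one]

/-- The 2-sphere parametrization inside the m-sphere. -/
noncomputable def Psi (hm : 2 ≤ m) (s t : ℝ) : Sph m :=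
  ⟨wcoord hm s t, by rw [mem_sphere_zero_iff_norm, wcoord_norm]⟩

lemma continuous_Psi (hm : 2 ≤ m) : Continuous (fun p : ℝ × ℝ => Psi hm p.1 p.2) := by
  apply Continuous.subtype_mk
  have : Continuous (fun p : ℝ × ℝ => (fun i =>
      if i = (⟨0, by omega⟩ : Fin (m+1)) then cl p.1 * Real.cos (2 * π * p.2)
      else if i = (⟨1, by omega⟩ : Fin (m+1)) then cl p.1 * Real.sin (2 * π * p.2)
      else if i = (⟨2, by omega⟩ : Fin (m+1)) then Real.sqrt (1 - cl p.1 ^ 2)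
      else 0 : Fin (m+1) → ℝ)) := by
    apply continuous_pi
    intro i
    split_ifs
    · exact (continuous_cl.comp continuous_fst).mul
        (Real.continuous_cos.comp (continuous_const.mul continuous_snd))
    · exact (continuous_cl.comp continuous_fst).mul
        (Real.continuous_sin.comp (continuous_const.mul continuous_snd))
    · exact Real.continuous_sqrt.comp
        (continuous_const.sub ((continuous_cl.comp continuous_fst).pow 2))
    · exact continuous_const
  exact ((EuclideanSpace.equiv (Fin (m+1)) ℝ).symm.continuous.comp this : _)

lemma Psi_loop (hm : 2 ≤ m) (s : ℝ) : Psi hm s 1 = Psi hm s 0 := by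
  apply Subtype.ext
  ext i
  show wcoord hm s 1 i = wcoord hm s 0 i
  rw [wcoord, wcoord, PiLp.toLp_apply, PiLp.toLp_apply]
  split_ifs <;> norm_num [Real.cos_two_pi, Real.sin_two_pi]

lemma Psi_pole (hm : 2 ≤ m) (t : ℝ) : Psi hm 0 t = Psi hm 0 0 := by
  apply Subtype.ext
  ext i
  show wcoord hm 0 t i = wcoord hm 0 0 i
  rw [wcoord, wcoord, PiLp.toLp_apply, PiLp.toLp_apply]
  split_ifs <;> simp [cl_zero]

lemma Psi_antipode (hm : 2 ≤ m) (t : ℝ) : Psi hm 1 (t + 1/2) = - Psi hm 1 t := by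
  apply Subtype.ext
  rw [coe_neg_sphere]
  ext i
  show wcoord hm 1 (t + 1/2) i = (-(wcoord hm 1 t : EuclideanSpace ℝ (Fin (m+1)))) i
  have hneg : (-(wcoord hm 1 t : EuclideanSpace ℝ (Fin (m+1)))) i = -(wcoord hm 1 t i) := rfl
  rw [hneg, wcoord, wcoord, PiLp.toLp_apply, PiLp.toLp_apply]
  have harg : 2 * π * (t + 1/2) = 2 * π * t + π := by ring
  split_ifs
  · rw [harg, Real.cos_add_pi]; ring
  · rw [harg, Real.sin_add_pi]; ring
  · rw [cl_one]; norm_num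
  · norm_num

end Psi

/-- There is no continuous odd nonvanishing complex function on the m-sphere, m ≥ 2. -/
lemma no_odd_nonvanishing (hm : 2 ≤ m) (g : Sph m → ℂ) (hg : Continuous g)
    (hodd : ∀ x, g (-x) = - g x) (hne : ∀ x, g x ≠ 0) : False := by
  set G : ℝ × ℝ → ℂ := fun p => g (Psi hm p.1 p.2) with hG
  have hGcont : Continuous G := hg.comp (continuous_Psi hm)
  have hG0 : ∀ p, G p ≠ 0 := fun p => hne _
  obtain ⟨L, hLcont, hLexp⟩ := exists_continuous_log hGcont hG0
  set Q : Set (ℝ × ℝ) := (Set.Icc (0:ℝ) 1) ×ˢ (Set.Icc (0:ℝ) 1) with hQ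
  have hmem : ∀ s ∈ Set.Icc (0:ℝ) 1, ∀ t ∈ Set.Icc (0:ℝ) 1, (s, t) ∈ Q := by
    intro s hs t ht; exact ⟨hs, ht⟩
  have h01 : (0:ℝ) ∈ Set.Icc (0:ℝ) 1 := by norm_num
  have h11 : (1:ℝ) ∈ Set.Icc (0:ℝ) 1 := by norm_num
  -- d s := L (s,1) - L (s,0) satisfies exp (d s) = 1
  set d : ℝ → ℂ := fun s => L (s, 1) - L (s, 0) with hd
  have hdcont : ContinuousOn d (Set.Icc (0:ℝ) 1) := by
    apply ContinuousOn.sub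
    · exact hLcont.comp (Continuous.continuousOn (by fun_prop))
        (fun s hs => hmem s hs 1 h11)
    · exact hLcont.comp (Continuous.continuousOn (by fun_prop))
        (fun s hs => hmem s hs 0 h01)
  have hdone : ∀ s ∈ Set.Icc (0:ℝ) 1, Complex.exp (d s) = 1 := by
    intro s hs
    rw [hd]
    simp only
    rw [Complex.exp_sub, hLexp _ (hmem s hs 1 h11), hLexp _ (hmem s hs 0 h01)]
    have : G (s, 1) = G (s, 0) := by
      show g (Psi hm s 1) = g (Psi hm s 0)
      rw [Psi_loop]
    rw [this, div_self (hG0 _)]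
  have hdconst := const_of_exp_const hdcont
    (fun x hx y hy => by rw [hdone x hx, hdone y hy]) 1 h11 0 h01
  -- d 0 = 0
  have hL0cont : ContinuousOn (fun t => L (0, t)) (Set.Icc (0:ℝ) 1) :=
    hLcont.comp (Continuous.continuousOn (by fun_prop)) (fun t ht => hmem 0 h01 t ht)
  have hL0exp : ∀ x ∈ Set.Icc (0:ℝ) 1, ∀ y ∈ Set.Icc (0:ℝ) 1,
      Complex.exp (L (0, x)) = Complex.exp (L (0, y)) := by
    intro x hx y hy
    rw [hLexp _ (hmem 0 h01 x hx), hLexp _ (hmem 0 h01 y hy)]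
    show g (Psi hm 0 x) = g (Psi hm 0 y)
    rw [Psi_pole hm x, Psi_pole hm y]
  have hd0 : d 0 = 0 := by
    have := const_of_exp_const hL0cont hL0exp 1 h11 0 h01
    rw [hd]; simp only; rw [this]; ring
  have hd1 : d 1 = 0 := by rw [hdconst, hd0]
  -- c t := L (1, t+1/2) - L (1, t) satisfies exp (c t) = -1
  set c : ℝ → ℂ := fun t => L (1, t + 1/2) - L (1, t) with hc
  have hhalf : ∀ t ∈ Set.Icc (0:ℝ) (1/2), t ∈ Set.Icc (0:ℝ) 1 := by
    rintro t ⟨ht0, ht1⟩; constructor <;> linarith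
  have hhalf' : ∀ t ∈ Set.Icc (0:ℝ) (1/2), t + 1/2 ∈ Set.Icc (0:ℝ) 1 := by
    rintro t ⟨ht0, ht1⟩; constructor <;> linarith
  have hccont : ContinuousOn c (Set.Icc (0:ℝ) (1/2)) := by
    apply ContinuousOn.sub
    · exact hLcont.comp (Continuous.continuousOn (by fun_prop))
        (fun t ht => hmem 1 h11 _ (hhalf' t ht))
    · exact hLcont.comp (Continuous.continuousOn (by fun_prop))
        (fun t ht => hmem 1 h11 _ (hhalf t ht))
  have hcexp : ∀ t ∈ Set.Icc (0:ℝ) (1/2), Complex.exp (c t) = -1 := by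
    intro t ht
    rw [hc]
    simp only
    rw [Complex.exp_sub, hLexp _ (hmem 1 h11 _ (hhalf' t ht)),
      hLexp _ (hmem 1 h11 _ (hhalf t ht))]
    have : G (1, t + 1/2) = - G (1, t) := by
      show g (Psi hm 1 (t + 1/2)) = - g (Psi hm 1 t)
      rw [Psi_antipode, hodd]
    rw [this, neg_div, div_self (hG0 _)]
  have h0half : (0:ℝ) ∈ Set.Icc (0:ℝ) (1/2) := by norm_num
  have hhalfhalf : (1/2:ℝ) ∈ Set.Icc (0:ℝ) (1/2) := by norm_num
  have hcconst := const_of_exp_const hccont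
    (fun x hx y hy => by rw [hcexp x hx, hcexp y hy]) (1/2) hhalfhalf 0 h0half
  -- combine
  have hsum : d 1 = c (1/2) + c 0 := by
    rw [hd, hc]
    simp only
    norm_num
  rw [hd1, hcconst] at hsum
  have hc0 : c 0 = 0 := by
    have : (2:ℂ) * c 0 = 0 := by rw [two_mul]; exact hsum.symm
    have h2 : (2:ℂ) ≠ 0 := by norm_num
    exact (mul_eq_zero.mp this).resolve_left h2
  have := hcexp 0 h0half
  rw [hc0, Complex.exp_zero] at this
  norm_num at this

end BUaux


section BUP
open BUaux

lemma bup_of_embedding {Γ : Type*} [TopologicalSpace Γ]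
    (e : Γ → EuclideanSpace ℝ (Fin 2)) (he : Topology.IsEmbedding e)
    (m : ℕ) (hm : 2 ≤ m) : BorsukUlamProperty (Sph m) (antipodal m) Γ := by
  intro f hf
  by_contra hcon
  push_neg at hcon
  have hant : ∀ x : Sph m, antipodal m x = -x := fun _ => rfl
  set g : Sph m → ℂ := fun x =>
    ((e (f x) 0 - e (f (-x)) 0 : ℝ) : ℂ) +
      ((e (f x) 1 - e (f (-x)) 1 : ℝ) : ℂ) * Complex.I with hgdef
  have hcoord : ∀ i : Fin 2, Continuous fun x : Sph m => e (f x) i :=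
    fun i => (by fun_prop : Continuous fun y : EuclideanSpace ℝ (Fin 2) => y i).comp (he.continuous.comp hf)
  have hcoordneg : ∀ i : Fin 2, Continuous fun x : Sph m => e (f (-x)) i :=
    fun i => (hcoord i).comp continuous_neg
  have hg : Continuous g := by
    apply Continuous.add
    · exact Complex.continuous_ofReal.comp ((hcoord 0).sub (hcoordneg 0))
    · exact (Complex.continuous_ofReal.comp ((hcoord 1).sub (hcoordneg 1))).mul
        continuous_const
  have hodd : ∀ x, g (-x) = - g x := by
    intro x
    rw [hgdef]
    simp only
    rw [neg_neg]
    push_cast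
    ring
  have hne : ∀ x, g x ≠ 0 := by
    intro x hx0
    have hparts : (e (f x) 0 - e (f (-x)) 0 = 0) ∧ (e (f x) 1 - e (f (-x)) 1 = 0) := by
      rw [hgdef] at hx0
      simp only at hx0
      constructor
      · have := congrArg Complex.re hx0
        simpa using this
      · have := congrArg Complex.im hx0
        simpa using this
    have hco : ∀ i : Fin 2, e (f x) i = e (f (-x)) i := by
      intro i
      rcases i with ⟨iv, hiv⟩
      interval_cases iv
      · exact sub_eq_zero.mp hparts.1
      · exact sub_eq_zero.mp hparts.2
    have heq : e (f x) = e (f (-x)) := PiLp.ext hco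
    have : f x = f (-x) := he.injective heq
    exact hcon x (by rw [hant]; exact this.symm)
  exact no_odd_nonvanishing hm g hg hodd hne

end BUP

/-- for a planar graph `Γ` (a Hausdorff space carrying a CW structure of
dimension at most 1 and embeddable in the plane) with `F(Γ,2)` path-connected,
`((Sᵐ,A);Γ)` satisfies the BUP for all `m ≥ 2`, and `secat (q^Γ) = 2`. -/
theorem stmt_11 {Γ : Type*} [TopologicalSpace Γ] [T2Space Γ]
    (S : CWStructure Γ) (hgraph : S.DimLE 1)
    (hplanar : ∃ e : Γ → EuclideanSpace ℝ (Fin 2), Topology.IsEmbedding e)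
    [PathConnectedSpace (Conf2 Γ)] :
    (∀ m : ℕ, 2 ≤ m → BorsukUlamProperty (Sph m) (antipodal m) Γ) ∧
    secat (confQuotMk Γ) = 2 := by
  obtain ⟨e, he⟩ := hplanar
  constructor
  · intro m hm
    exact bup_of_embedding e he m hm
  · exact secat_confQuotMk_eq_two e he
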